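/- Let K be a field of characteristic zero and let S and C be types. Consider the Lie algebra morphism φ : FreeLieAlgebra K (C × List S) → FreeLieAlgebra K (S ⊕ C) induced by sending a generator (c, [s₁, …, s_k]) to the left-normed iterated bracket ⁅⋯⁅⁅ι(inr c), ι(inl s₁)⁆, ι(inl s₂)⁆, ⋯, ι(inl s_k)⁆ (equal to ι(inr c) when the list is empty). Then φ is injective and its image is exactly the Lie ideal of FreeLieAlgebra K (S ⊕ C) generated by the image of C; in particular, this Lie ideal is a free Lie algebra on the set C × List S. -/

import Mathlib

namespace Lazard
variable (K : Type*) [Field K]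

theorem mem_of_forall_of {X : Type*} {A : LieSubalgebra K (FreeLieAlgebra K X)}
    (h : ∀ x, FreeLieAlgebra.of K x ∈ A) (m : FreeLieAlgebra K X) : m ∈ A := by
  let g : FreeLieAlgebra K X →ₗ⁅K⁆ A :=
    FreeLieAlgebra.lift K (fun x => (⟨FreeLieAlgebra.of K x, h x⟩ : A))
  have key : A.incl.comp g = LieHom.id := by
    apply FreeLieAlgebra.hom_ext
    intro x
    simp [g, FreeLieAlgebra.lift_of_apply]
  have h2 := DFunLike.congr_fun key m
  simp only [LieHom.comp_apply, LieHom.id_apply] at h2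
  rw [← h2]
  exact (g m).2

section DN
variable (X : Type*)

noncomputable local instance instDNBracket :
    Bracket (FreeLieAlgebra K X × FreeLieAlgebra K X) (FreeLieAlgebra K X × FreeLieAlgebra K X) :=
  ⟨fun p q => (⁅p.1, q.1⁆, ⁅p.1, q.2⁆ + ⁅p.2, q.1⁆)⟩

lemma dn_bracket_def (p q : FreeLieAlgebra K X × FreeLieAlgebra K X) :
    ⁅p, q⁆ = (⁅p.1, q.1⁆, ⁅p.1, q.2⁆ + ⁅p.2, q.1⁆) := rfl

noncomputable local instance instDNLieRing : LieRing (FreeLieAlgebra K X × FreeLieAlgebra K X) :=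
  { (inferInstance : AddCommGroup (FreeLieAlgebra K X × FreeLieAlgebra K X)),
    instDNBracket K X with
    add_lie := fun p q r => by
      refine Prod.ext ?_ ?_ <;> simp [dn_bracket_def, add_lie] <;> abel
    lie_add := fun p q r => by
      refine Prod.ext ?_ ?_ <;> simp [dn_bracket_def, lie_add] <;> abel
    lie_self := fun p => by
      refine Prod.ext ?_ ?_
      · simp [dn_bracket_def]
      · show ⁅p.1, p.2⁆ + ⁅p.2, p.1⁆ = (0 : _ × _).2
        rw [← lie_skew p.1 p.2, neg_add_cancel]
        rfl
    leibniz_lie := fun p q r => by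
      refine Prod.ext ?_ ?_ <;>
        simp only [dn_bracket_def, lie_add, add_lie, lie_lie, Prod.fst_add, Prod.snd_add] <;> abel }

noncomputable local instance instDNLieAlgebra :
    LieAlgebra K (FreeLieAlgebra K X × FreeLieAlgebra K X) :=
  { (inferInstance : Module K (FreeLieAlgebra K X × FreeLieAlgebra K X)) with
    lie_smul := fun t p q => by
      refine Prod.ext ?_ ?_ <;> simp [dn_bracket_def, lie_smul] }

/-- First projection as a Lie algebra morphism. -/
noncomputable def dnFst : (FreeLieAlgebra K X × FreeLieAlgebra K X) →ₗ⁅K⁆ FreeLieAlgebra K X where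
  toFun := Prod.fst
  map_add' _ _ := rfl
  map_smul' _ _ := rfl
  map_lie' := rfl

variable {S C : Type*}

/-- Auxiliary morphism into the "dual numbers" Lie algebra. -/
noncomputable def tau (s : S) :
    FreeLieAlgebra K (C × List S) →ₗ⁅K⁆
      (FreeLieAlgebra K (C × List S) × FreeLieAlgebra K (C × List S)) :=
  FreeLieAlgebra.lift K
    (fun p => (FreeLieAlgebra.of K p, FreeLieAlgebra.of K (p.1, p.2 ++ [s])))

lemma tau_fst (s : S) (m : FreeLieAlgebra K (C × List S)) : (tau K (C := C) s m).1 = m := by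
  have key : (dnFst K (C × List S)).comp (tau K (C := C) s) = LieHom.id := by
    apply FreeLieAlgebra.hom_ext
    intro p
    simp [tau, dnFst, FreeLieAlgebra.lift_of_apply]
  have := DFunLike.congr_fun key m
  simpa [dnFst] using this

/-- Underlying linear map of the appending derivation. -/
noncomputable def DsLin (s : S) :
    FreeLieAlgebra K (C × List S) →ₗ[K] FreeLieAlgebra K (C × List S) :=
  (LinearMap.snd K (FreeLieAlgebra K (C × List S)) (FreeLieAlgebra K (C × List S))).comp (tau K (C := C) s : _ →ₗ[K] _)

lemma DsLin_apply (s : S) (m : FreeLieAlgebra K (C × List S)) :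
    DsLin K s m = (tau K (C := C) s m).2 := rfl

/-- The derivation of the free Lie algebra on `C × List S` appending `s` to the list. -/
noncomputable def Ds (s : S) :
    LieDerivation K (FreeLieAlgebra K (C × List S)) (FreeLieAlgebra K (C × List S)) where
  toLinearMap := DsLin K s
  leibniz' a b := by
    have h : tau K (C := C) s ⁅a, b⁆ = ⁅tau K (C := C) s a, tau K (C := C) s b⁆ :=
      (tau K (C := C) s).map_lie a b
    simp only [DsLin_apply, h, dn_bracket_def, tau_fst]
    rw [← lie_skew b ((tau K (C := C) s a).2)]
    abel

lemma Ds_apply (s : S) (m : FreeLieAlgebra K (C × List S)) :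
    Ds K s m = (tau K (C := C) s m).2 := rfl

lemma Ds_of (s : S) (p : C × List S) :
    Ds K s (FreeLieAlgebra.of K p) = FreeLieAlgebra.of K (p.1, p.2 ++ [s]) := by
  rw [Ds_apply, tau, FreeLieAlgebra.lift_of_apply]

end DN
section SD
variable (S C : Type*)

/-- The action of the free Lie algebra on `S` on the free Lie algebra on `C × List S`
by derivations. -/
noncomputable def rho : FreeLieAlgebra K S →ₗ⁅K⁆
    LieDerivation K (FreeLieAlgebra K (C × List S)) (FreeLieAlgebra K (C × List S)) :=
  FreeLieAlgebra.lift K (fun s => -(Ds K (C := C) s))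

lemma rho_of (s : S) : rho K S C (FreeLieAlgebra.of K s) = -(Ds K (C := C) s) :=
  FreeLieAlgebra.lift_of_apply _ _

noncomputable local instance sdBracket :
    Bracket (FreeLieAlgebra K S × FreeLieAlgebra K (C × List S))
      (FreeLieAlgebra K S × FreeLieAlgebra K (C × List S)) :=
  ⟨fun p q => (⁅p.1, q.1⁆, rho K S C p.1 q.2 - rho K S C q.1 p.2 + ⁅p.2, q.2⁆)⟩

lemma sd_bracket_def (p q : FreeLieAlgebra K S × FreeLieAlgebra K (C × List S)) :
    ⁅p, q⁆ = (⁅p.1, q.1⁆, rho K S C p.1 q.2 - rho K S C q.1 p.2 + ⁅p.2, q.2⁆) := rfl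

noncomputable local instance sdLieRing :
    LieRing (FreeLieAlgebra K S × FreeLieAlgebra K (C × List S)) :=
  { (inferInstance : AddCommGroup (FreeLieAlgebra K S × FreeLieAlgebra K (C × List S))),
    sdBracket K S C with
    add_lie := fun p q r => by
      refine Prod.ext ?_ ?_
      · simp [sd_bracket_def, add_lie]
      · simp only [sd_bracket_def, Prod.fst_add, Prod.snd_add, map_add,
          LieDerivation.add_apply, map_add, add_lie]
        abel
    lie_add := fun p q r => by
      refine Prod.ext ?_ ?_
      · simp [sd_bracket_def, lie_add]
      · simp only [sd_bracket_def, Prod.fst_add, Prod.snd_add, map_add,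
          LieDerivation.add_apply, map_add, lie_add]
        abel
    lie_self := fun p => by
      refine Prod.ext ?_ ?_
      · simp [sd_bracket_def]
      · show rho K S C p.1 p.2 - rho K S C p.1 p.2 + ⁅p.2, p.2⁆ = (0 : _ × _).2
        simp
    leibniz_lie := fun p q r => by
      refine Prod.ext ?_ ?_
      · show ⁅p.1, ⁅q.1, r.1⁆⁆ = ⁅⁅p.1, q.1⁆, r.1⁆ + ⁅q.1, ⁅p.1, r.1⁆⁆
        exact leibniz_lie p.1 q.1 r.1
      · simp only [sd_bracket_def, Prod.fst_add, Prod.snd_add, map_sub, map_add,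
          LieHom.map_lie, LieDerivation.lie_apply, LieDerivation.apply_lie_eq_add,
          lie_add, add_lie, lie_sub, sub_lie, lie_lie]
        rw [← lie_skew (rho K S C r.1 p.2) q.2]
        abel }

noncomputable local instance sdLieAlgebra :
    LieAlgebra K (FreeLieAlgebra K S × FreeLieAlgebra K (C × List S)) :=
  { (inferInstance : Module K (FreeLieAlgebra K S × FreeLieAlgebra K (C × List S))) with
    lie_smul := fun t p q => by
      refine Prod.ext ?_ ?_
      · simp [sd_bracket_def]
      · simp only [sd_bracket_def, Prod.smul_fst, Prod.smul_snd, map_smul,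
          LieDerivation.smul_apply, map_smul, lie_smul, smul_sub, smul_add] }

/-- The comparison morphism into the semidirect product. -/
noncomputable def Psi : FreeLieAlgebra K (S ⊕ C) →ₗ⁅K⁆
    (FreeLieAlgebra K S × FreeLieAlgebra K (C × List S)) :=
  FreeLieAlgebra.lift K (Sum.elim (fun s => (FreeLieAlgebra.of K s, 0))
    (fun c => (0, FreeLieAlgebra.of K (c, ([] : List S)))))

lemma Psi_of (x : S ⊕ C) : Psi K S C (FreeLieAlgebra.of K x) =
    Sum.elim (fun s => ((FreeLieAlgebra.of K s : FreeLieAlgebra K S), 0))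
      (fun c => (0, FreeLieAlgebra.of K (c, ([] : List S)))) x :=
  FreeLieAlgebra.lift_of_apply _ _

/-- The inclusion of the second factor as a Lie algebra morphism. -/
noncomputable def jHom : FreeLieAlgebra K (C × List S) →ₗ⁅K⁆
    (FreeLieAlgebra K S × FreeLieAlgebra K (C × List S)) where
  toFun m := ((0 : FreeLieAlgebra K S), m)
  map_add' x y := by refine Prod.ext ?_ ?_ <;> simp
  map_smul' t x := by refine Prod.ext ?_ ?_ <;> simp
  map_lie' {x y} := by
    refine Prod.ext ?_ ?_
    · show (0 : FreeLieAlgebra K S) = ⁅(0 : FreeLieAlgebra K S), (0 : FreeLieAlgebra K S)⁆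
      simp
    · show ⁅x, y⁆ = rho K S C 0 y - rho K S C 0 x + ⁅x, y⁆
      rw [map_zero (rho K S C)]
      simp

/-- The canonical morphism `φ`. -/
noncomputable def phi : FreeLieAlgebra K (C × List S) →ₗ⁅K⁆ FreeLieAlgebra K (S ⊕ C) :=
  FreeLieAlgebra.lift K (fun p : C × List S =>
    p.2.foldl (fun x s => ⁅x, FreeLieAlgebra.of K (Sum.inl s)⁆)
      (FreeLieAlgebra.of K (Sum.inr p.1)))

lemma phi_of (p : C × List S) :
    phi K S C (FreeLieAlgebra.of K p) =
      p.2.foldl (fun x s => ⁅x, FreeLieAlgebra.of K (Sum.inl s)⁆)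
        (FreeLieAlgebra.of K (Sum.inr p.1)) :=
  FreeLieAlgebra.lift_of_apply _ _

lemma psi_foldl (l : List S) (c : C) :
    Psi K S C (l.foldl (fun x s => ⁅x, FreeLieAlgebra.of K (Sum.inl s)⁆)
        (FreeLieAlgebra.of K (Sum.inr c))) =
      (0, FreeLieAlgebra.of K (c, l)) := by
  induction l using List.reverseRecOn with
  | nil =>
    show Psi K S C (FreeLieAlgebra.of K (Sum.inr c)) = _
    rw [Psi_of]
    rfl
  | append_singleton l s ih =>
    rw [List.foldl_append]
    simp only [List.foldl_cons, List.foldl_nil]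
    rw [LieHom.map_lie, ih]
    have hs : Psi K S C (FreeLieAlgebra.of K (Sum.inl s)) = (FreeLieAlgebra.of K s, 0) := by
      rw [Psi_of]; rfl
    rw [hs]
    refine Prod.ext ?_ ?_
    · show ⁅(0 : FreeLieAlgebra K S), FreeLieAlgebra.of K s⁆ = 0
      simp
    · show rho K S C 0 0 - rho K S C (FreeLieAlgebra.of K s) (FreeLieAlgebra.of K (c, l)) +
        ⁅FreeLieAlgebra.of K (c, l), 0⁆ = FreeLieAlgebra.of K (c, l ++ [s])
      rw [rho_of]
      simp [Ds_of]

lemma psi_phi : (Psi K S C).comp (phi K S C) = jHom K S C := by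
  apply FreeLieAlgebra.hom_ext
  intro p
  rw [LieHom.comp_apply, phi_of, psi_foldl]
  rfl

lemma phi_injective : Function.Injective (phi K S C) := by
  intro m m' h
  have h2 : jHom K S C m = jHom K S C m' := by
    rw [← psi_phi]
    simp only [LieHom.comp_apply, h]
  exact congrArg Prod.snd h2

/-- The inclusion of the free Lie algebra on `S`. -/
noncomputable def sigma : FreeLieAlgebra K S →ₗ⁅K⁆ FreeLieAlgebra K (S ⊕ C) :=
  FreeLieAlgebra.lift K (fun s => FreeLieAlgebra.of K (Sum.inl s))

lemma sigma_of (s : S) : sigma K S C (FreeLieAlgebra.of K s) =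
    FreeLieAlgebra.of K (Sum.inl s) :=
  FreeLieAlgebra.lift_of_apply _ _

lemma bracket_e (s : S) (y : FreeLieAlgebra K (C × List S)) :
    ⁅phi K S C y, FreeLieAlgebra.of K (Sum.inl s)⁆ = phi K S C (Ds K (C := C) s y) := by
  let A : LieSubalgebra K (FreeLieAlgebra K (C × List S)) :=
    { carrier := {y | ⁅phi K S C y, FreeLieAlgebra.of K (Sum.inl s)⁆ =
        phi K S C (Ds K (C := C) s y)}
      add_mem' := fun {a b} (ha : ⁅phi K S C a, _⁆ = _) (hb : ⁅phi K S C b, _⁆ = _) => by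
        show ⁅phi K S C (a + b), _⁆ = phi K S C (Ds K (C := C) s (a + b))
        rw [map_add (phi K S C), add_lie, ha, hb, map_add, map_add (phi K S C)]
      zero_mem' := by
        show ⁅phi K S C 0, _⁆ = phi K S C (Ds K (C := C) s 0)
        rw [map_zero (phi K S C), zero_lie, map_zero, map_zero (phi K S C)]
      smul_mem' := fun t {x} (hx : ⁅phi K S C x, _⁆ = _) => by
        show ⁅phi K S C (t • x), _⁆ = phi K S C (Ds K (C := C) s (t • x))
        rw [map_smul (phi K S C), smul_lie, hx, map_smul, map_smul (phi K S C)]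
      lie_mem' := fun {a b} (ha : ⁅phi K S C a, _⁆ = _) (hb : ⁅phi K S C b, _⁆ = _) => by
        show ⁅phi K S C ⁅a, b⁆, _⁆ = phi K S C (Ds K (C := C) s ⁅a, b⁆)
        rw [(phi K S C).map_lie, lie_lie, ha, hb, LieDerivation.apply_lie_eq_add,
          map_add (phi K S C), (phi K S C).map_lie, (phi K S C).map_lie,
          ← lie_skew (phi K S C (Ds K (C := C) s a)) (phi K S C b)]
        abel }
  have gen : ∀ p : C × List S, FreeLieAlgebra.of K p ∈ A := by
    intro p
    show ⁅phi K S C (FreeLieAlgebra.of K p), FreeLieAlgebra.of K (Sum.inl s)⁆ =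
      phi K S C (Ds K (C := C) s (FreeLieAlgebra.of K p))
    rw [Ds_of, phi_of, phi_of]
    show _ = List.foldl _ _ (p.2 ++ [s])
    rw [List.foldl_append]
    simp
  exact mem_of_forall_of K gen y

lemma bracket_sigma_phi (a : FreeLieAlgebra K S) (y : FreeLieAlgebra K (C × List S)) :
    ⁅sigma K S C a, phi K S C y⁆ = phi K S C (rho K S C a y) := by
  let A : LieSubalgebra K (FreeLieAlgebra K S) :=
    { carrier := {a | ∀ y, ⁅sigma K S C a, phi K S C y⁆ = phi K S C (rho K S C a y)}
      add_mem' := fun {a b} (ha : ∀ y, _) (hb : ∀ y, _) => by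
        intro y
        rw [map_add (sigma K S C), add_lie, ha y, hb y, map_add,
          LieDerivation.add_apply, map_add (phi K S C)]
      zero_mem' := by
        intro y
        rw [map_zero (sigma K S C), zero_lie, map_zero (rho K S C),
          LieDerivation.zero_apply, map_zero (phi K S C)]
      smul_mem' := fun t {x} (hx : ∀ y, _) => by
        intro y
        rw [map_smul (sigma K S C), smul_lie, hx y, map_smul,
          LieDerivation.smul_apply, map_smul (phi K S C)]
      lie_mem' := fun {a b} (ha : ∀ y, _) (hb : ∀ y, _) => by
        intro y
        rw [(sigma K S C).map_lie, lie_lie, hb y, ha (rho K S C b y), ha y,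
          hb (rho K S C a y), (rho K S C).map_lie, LieDerivation.lie_apply,
          map_sub (phi K S C)] }
  have gen : ∀ x : S, FreeLieAlgebra.of K x ∈ A := by
    intro x
    intro y
    show ⁅sigma K S C (FreeLieAlgebra.of K x), phi K S C y⁆ = _
    rw [sigma_of, ← lie_skew, bracket_e, rho_of, LieDerivation.neg_apply,
      map_neg (phi K S C)]
  exact mem_of_forall_of K gen a y

lemma decomposition (z : FreeLieAlgebra K (S ⊕ C)) :
    ∃ (a : FreeLieAlgebra K S) (m : FreeLieAlgebra K (C × List S)),
      z = sigma K S C a + phi K S C m := by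
  let A : LieSubalgebra K (FreeLieAlgebra K (S ⊕ C)) :=
    { carrier := {z | ∃ a m, z = sigma K S C a + phi K S C m}
      add_mem' := fun {u v} hu hv => by
        obtain ⟨a, m, hu⟩ := hu
        obtain ⟨b, n, hv⟩ := hv
        exact ⟨a + b, m + n, by
          rw [hu, hv, map_add (sigma K S C), map_add (phi K S C)]; abel⟩
      zero_mem' := ⟨0, 0, by rw [map_zero (sigma K S C), map_zero (phi K S C), add_zero]⟩
      smul_mem' := fun t {x} hx => by
        obtain ⟨a, m, hx⟩ := hx
        exact ⟨t • a, t • m, by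
          rw [hx, map_smul (sigma K S C), map_smul (phi K S C), smul_add]⟩
      lie_mem' := fun {u v} hu hv => by
        obtain ⟨a, m, hu⟩ := hu
        obtain ⟨b, n, hv⟩ := hv
        refine ⟨⁅a, b⁆, rho K S C a n - rho K S C b m + ⁅m, n⁆, ?_⟩
        rw [hu, hv]
        simp only [lie_add, add_lie]
        rw [← (sigma K S C).map_lie, bracket_sigma_phi,
          show ⁅phi K S C m, sigma K S C b⁆ = -⁅sigma K S C b, phi K S C m⁆ from
            (lie_skew _ _).symm,
          bracket_sigma_phi, ← (phi K S C).map_lie, map_add (phi K S C),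
          map_sub (phi K S C)]
        abel }
  have gen : ∀ x : S ⊕ C, FreeLieAlgebra.of K x ∈ A := by
    rintro (s | c)
    · exact ⟨FreeLieAlgebra.of K s, 0,
        by rw [sigma_of, map_zero (phi K S C), add_zero]⟩
    · refine ⟨0, FreeLieAlgebra.of K (c, ([] : List S)), ?_⟩
      rw [map_zero (sigma K S C), zero_add, phi_of]
      rfl
  exact mem_of_forall_of K gen z

/-- The Lie ideal generated by the image of `C`. -/
noncomputable def Jspan : LieIdeal K (FreeLieAlgebra K (S ⊕ C)) :=
  LieSubmodule.lieSpan K (FreeLieAlgebra K (S ⊕ C))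
    (Set.range (fun c : C => FreeLieAlgebra.of K (Sum.inr c)))

lemma foldl_mem_Jspan (l : List S) (c : C) :
    (l.foldl (fun x s => ⁅x, FreeLieAlgebra.of K (Sum.inl s)⁆)
        (FreeLieAlgebra.of K (Sum.inr c))) ∈ Jspan K S C := by
  induction l using List.reverseRecOn with
  | nil => exact LieSubmodule.subset_lieSpan ⟨c, rfl⟩
  | append_singleton l s ih =>
    rw [List.foldl_append]
    simp only [List.foldl_cons, List.foldl_nil]
    rw [show ⁅List.foldl (fun x s => ⁅x, FreeLieAlgebra.of K (Sum.inl s)⁆)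
          (FreeLieAlgebra.of K (Sum.inr c)) l, FreeLieAlgebra.of K (Sum.inl s)⁆ =
        -⁅FreeLieAlgebra.of K (Sum.inl s),
          List.foldl (fun x s => ⁅x, FreeLieAlgebra.of K (Sum.inl s)⁆)
            (FreeLieAlgebra.of K (Sum.inr c)) l⁆ from (lie_skew _ _).symm]
    exact (Jspan K S C).neg_mem ((Jspan K S C).lie_mem ih)

lemma phi_mem_Jspan (m : FreeLieAlgebra K (C × List S)) : phi K S C m ∈ Jspan K S C := by
  let A : LieSubalgebra K (FreeLieAlgebra K (C × List S)) :=
    { carrier := {m | phi K S C m ∈ Jspan K S C}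
      add_mem' := fun {a b} ha hb => by
        show phi K S C (a + b) ∈ Jspan K S C
        rw [map_add (phi K S C)]
        exact (Jspan K S C).add_mem ha hb
      zero_mem' := by
        show phi K S C 0 ∈ Jspan K S C
        rw [map_zero (phi K S C)]
        exact (Jspan K S C).zero_mem
      smul_mem' := fun t {x} hx => by
        show phi K S C (t • x) ∈ Jspan K S C
        rw [map_smul (phi K S C)]
        exact (Jspan K S C).smul_mem t hx
      lie_mem' := fun {a b} ha hb => by
        show phi K S C ⁅a, b⁆ ∈ Jspan K S C
        rw [(phi K S C).map_lie]
        exact (Jspan K S C).lie_mem hb }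
  have gen : ∀ p : C × List S, FreeLieAlgebra.of K p ∈ A := by
    intro p
    show phi K S C (FreeLieAlgebra.of K p) ∈ Jspan K S C
    rw [phi_of]
    exact foldl_mem_Jspan K S C p.2 p.1
  exact mem_of_forall_of K gen m

/-- The range of `φ` as a Lie ideal. -/
noncomputable def Iphi : LieIdeal K (FreeLieAlgebra K (S ⊕ C)) :=
  { carrier := Set.range (phi K S C)
    add_mem' := fun {a b} ha hb => by
      obtain ⟨x, rfl⟩ := ha
      obtain ⟨y, rfl⟩ := hb
      exact ⟨x + y, map_add (phi K S C) x y⟩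
    zero_mem' := ⟨0, map_zero (phi K S C)⟩
    smul_mem' := fun t {x} hx => by
      obtain ⟨y, rfl⟩ := hx
      exact ⟨t • y, map_smul (phi K S C) t y⟩
    lie_mem := fun {x m} hm => by
      obtain ⟨y, rfl⟩ := hm
      obtain ⟨a, n, rfl⟩ := decomposition K S C x
      refine ⟨rho K S C a y + ⁅n, y⁆, ?_⟩
      rw [map_add (phi K S C), add_lie, bracket_sigma_phi, (phi K S C).map_lie] }

lemma range_phi_eq : Set.range (phi K S C) = (Jspan K S C : Set (FreeLieAlgebra K (S ⊕ C))) := by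
  ext z
  constructor
  · rintro ⟨m, rfl⟩
    exact phi_mem_Jspan K S C m
  · intro hz
    have hle : Jspan K S C ≤ Iphi K S C := by
      rw [Jspan, LieSubmodule.lieSpan_le]
      rintro _ ⟨c, rfl⟩
      exact ⟨FreeLieAlgebra.of K (c, ([] : List S)), by rw [phi_of]; rfl⟩
    exact hle hz

end SD
end Lazard

/-- **Lazard Elimination, part 2.**
The Lie algebra morphism `φ : FreeLieAlgebra K (C × List S) → FreeLieAlgebra K (S ⊕ C)`
sending a generator `(c, [s₁, …, s_k])` to the left-normed bracket
`⁅⋯⁅⁅ι(inr c), ι(inl s₁)⁆, ι(inl s₂)⁆, ⋯, ι(inl s_k)⁆` is injective, and its image is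
exactly the Lie ideal generated by the image of `C`. -/
theorem lazard_elimination_part2 (K : Type*) [Field K] [CharZero K] (S C : Type*)
    (φ : FreeLieAlgebra K (C × List S) →ₗ⁅K⁆ FreeLieAlgebra K (S ⊕ C))
    (hφ : φ = FreeLieAlgebra.lift K (fun p : C × List S =>
      p.2.foldl (fun x s => ⁅x, FreeLieAlgebra.of K (Sum.inl s)⁆)
        (FreeLieAlgebra.of K (Sum.inr p.1)))) :
    Function.Injective φ ∧
      Set.range φ = (LieSubmodule.lieSpan K (FreeLieAlgebra K (S ⊕ C))
        (Set.range (fun c : C => FreeLieAlgebra.of K (Sum.inr c))) :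
          LieIdeal K (FreeLieAlgebra K (S ⊕ C))) := by
  have hphi : φ = Lazard.phi K S C := hφ
  subst hphi
  exact ⟨Lazard.phi_injective K S C, Lazard.range_phi_eq K S C⟩
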